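/- Let u ∈ C_b(ℝⁿ) and let C : ℝⁿ → ℝⁿ be a C¹ vector field whose derivative DC is bounded and uniformly continuous on ℝⁿ. Define R_{m,1}(x) = ∫_{ℝⁿ} u(y) div C(y) ρ_m(x−y) dy and R_{m,2}(x) = ∫_{ℝⁿ} u(y) ⟨C(x) − C(y), Dρ_m(x−y)⟩ dy. Then, as m → ∞, R_{m,1} converges uniformly on ℝⁿ to the function x ↦ u(x) div C(x), and R_{m,2} converges uniformly on ℝⁿ to the function x ↦ −u(x) div C(x); in particular R_{m,1} + R_{m,2} → 0 uniformly on ℝⁿ. -/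

import Mathlib

open MeasureTheory Filter Metric

noncomputable section

/-- `ℝⁿ` as a Euclidean space. -/
abbrev En (n : ℕ) := EuclideanSpace ℝ (Fin n)

/-- The `i`-th canonical basis vector of `ℝⁿ`. -/
def evec (n : ℕ) (i : Fin n) : En n := EuclideanSpace.single i 1

/-- `C_b(ℝⁿ)`: uniformly continuous and bounded. -/
def IsCb (n : ℕ) (f : En n → ℝ) : Prop :=
  UniformContinuous f ∧ ∃ M, ∀ x, |f x| ≤ M

/-- The mollifiers `ρ_m(x) = mⁿ ρ(m x)`. -/
def mollifier (n : ℕ) (ρ : En n → ℝ) (m : ℕ) (x : En n) : ℝ :=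
  (m : ℝ) ^ n * ρ ((m : ℝ) • x)

/-- The divergence `div C = Σ_i D_i C_i`. -/
def divg (n : ℕ) (C : En n → En n) (x : En n) : ℝ :=
  ∑ i, (fderiv ℝ C x (evec n i)) i

/-- `R_{m,1}(x) = ∫ u(y) div C(y) ρ_m(x−y) dy`. -/
def Rm1 (n : ℕ) (u : En n → ℝ) (C : En n → En n) (ρ : En n → ℝ) (m : ℕ) (x : En n) : ℝ :=
  ∫ y, u y * divg n C y * mollifier n ρ m (x - y)

/-- `R_{m,2}(x) = ∫ u(y) ⟨C(x) − C(y), Dρ_m(x−y)⟩ dy`. -/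
def Rm2 (n : ℕ) (u : En n → ℝ) (C : En n → En n) (ρ : En n → ℝ) (m : ℕ) (x : En n) : ℝ :=
  ∫ y, u y * fderiv ℝ (mollifier n ρ m) (x - y) (C x - C y)

namespace Stmt12

variable {n : ℕ} {ρ : En n → ℝ}

lemma coord_abs_le (w : En n) (i : Fin n) : |w i| ≤ ‖w‖ := by
  have h := abs_real_inner_le_norm (EuclideanSpace.single i (1:ℝ)) w
  simpa [EuclideanSpace.inner_single_left, EuclideanSpace.norm_single] using h

lemma euclid_decomp (w : En n) : ∑ i, w i • evec n i = w := by
  ext j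
  simp only [PiLp.smul_apply, smul_eq_mul]
  rw [WithLp.ofLp_sum, Finset.sum_apply]
  simp [evec, EuclideanSpace.single_apply]

lemma moll_hasFDerivAt (hρs : ContDiff ℝ (⊤ : ℕ∞) ρ) (m : ℕ) (z : En n) :
    HasFDerivAt (mollifier n ρ m) (((m:ℝ)^(n+1)) • fderiv ℝ ρ ((m:ℝ) • z)) z := by
  have h1 : HasFDerivAt (fun x : En n => (m:ℝ) • x)
      ((m:ℝ) • ContinuousLinearMap.id ℝ (En n)) z := (hasFDerivAt_id z).const_smul (m:ℝ)
  have h2 : HasFDerivAt ρ (fderiv ℝ ρ ((m:ℝ) • z)) ((m:ℝ) • z) :=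
    ((hρs.differentiable (by simp)) ((m:ℝ) • z)).hasFDerivAt
  have h3 := h2.comp z h1
  have h4 := h3.const_mul ((m:ℝ)^n)
  refine HasFDerivAt.congr_fderiv (f := mollifier n ρ m) h4 ?_
  ext v
  simp [pow_succ, mul_comm, mul_assoc, mul_left_comm]

lemma moll_fderiv (hρs : ContDiff ℝ (⊤ : ℕ∞) ρ) (m : ℕ) (z : En n) :
    fderiv ℝ (mollifier n ρ m) z = ((m:ℝ)^(n+1)) • fderiv ℝ ρ ((m:ℝ) • z) :=
  (moll_hasFDerivAt hρs m z).fderiv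

lemma moll_differentiable (hρs : ContDiff ℝ (⊤ : ℕ∞) ρ) (m : ℕ) :
    Differentiable ℝ (mollifier n ρ m) :=
  fun z => (moll_hasFDerivAt hρs m z).differentiableAt

lemma moll_continuous (hρs : ContDiff ℝ (⊤ : ℕ∞) ρ) (m : ℕ) :
    Continuous (mollifier n ρ m) :=
  continuous_const.mul (hρs.continuous.comp (continuous_const_smul _))

lemma cont_fderiv_moll (hρs : ContDiff ℝ (⊤ : ℕ∞) ρ) (m : ℕ) :
    Continuous fun z => fderiv ℝ (mollifier n ρ m) z := by
  have : (fun z => fderiv ℝ (mollifier n ρ m) z)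
      = fun z => ((m:ℝ)^(n+1)) • fderiv ℝ ρ ((m:ℝ) • z) := funext (moll_fderiv hρs m)
  rw [this]
  exact (((hρs.continuous_fderiv (by simp)).comp (continuous_const_smul (m:ℝ)))).const_smul ((m:ℝ)^(n+1))

lemma moll_hcs (hρc : HasCompactSupport ρ) {m : ℕ} (hm : m ≠ 0) :
    HasCompactSupport (mollifier n ρ m) := by
  have hm' : ((m:ℝ)) ≠ 0 := Nat.cast_ne_zero.2 hm
  have h : HasCompactSupport fun x : En n => ρ ((m:ℝ) • x) :=
    hρc.comp_homeomorph (Homeomorph.smulOfNeZero (m:ℝ) hm')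
  exact h.mul_left

lemma moll_nonneg (hρ01 : ∀ x, 0 ≤ ρ x ∧ ρ x ≤ 1) (m : ℕ) (z : En n) :
    0 ≤ mollifier n ρ m z :=
  mul_nonneg (by positivity) (hρ01 _).1

lemma moll_eq_zero (hρ0 : ∀ x : En n, 1 ≤ ‖x‖ → ρ x = 0) {m : ℕ} (hm : m ≠ 0)
    {z : En n} (hz : 1/(m:ℝ) ≤ ‖z‖) : mollifier n ρ m z = 0 := by
  have hm' : (0:ℝ) < m := by exact_mod_cast Nat.pos_of_ne_zero hm
  have : (1:ℝ) ≤ ‖(m:ℝ) • z‖ := by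
    rw [norm_smul, Real.norm_eq_abs, abs_of_pos hm']
    calc (1:ℝ) = (m:ℝ) * (1/(m:ℝ)) := by field_simp
    _ ≤ (m:ℝ) * ‖z‖ := by gcongr
  rw [mollifier, hρ0 _ this, mul_zero]

lemma fderiv_rho_eq_zero (hρs : ContDiff ℝ (⊤ : ℕ∞) ρ)
    (hρ01 : ∀ x, 0 ≤ ρ x ∧ ρ x ≤ 1) (hρ0 : ∀ x : En n, 1 ≤ ‖x‖ → ρ x = 0)
    {w : En n} (hw : 1 ≤ ‖w‖) : fderiv ℝ ρ w = 0 := by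
  have : IsLocalMin ρ w :=
    Filter.Eventually.of_forall fun y => by rw [hρ0 w hw]; exact (hρ01 y).1
  exact this.fderiv_eq_zero

lemma fderiv_moll_eq_zero (hρs : ContDiff ℝ (⊤ : ℕ∞) ρ)
    (hρ01 : ∀ x, 0 ≤ ρ x ∧ ρ x ≤ 1) (hρ0 : ∀ x : En n, 1 ≤ ‖x‖ → ρ x = 0)
    {m : ℕ} (hm : m ≠ 0) {z : En n} (hz : 1/(m:ℝ) ≤ ‖z‖) :
    fderiv ℝ (mollifier n ρ m) z = 0 := by
  have hm' : (0:ℝ) < m := by exact_mod_cast Nat.pos_of_ne_zero hm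
  have h1 : (1:ℝ) ≤ ‖(m:ℝ) • z‖ := by
    rw [norm_smul, Real.norm_eq_abs, abs_of_pos hm']
    calc (1:ℝ) = (m:ℝ) * (1/(m:ℝ)) := by field_simp
    _ ≤ (m:ℝ) * ‖z‖ := by gcongr
  rw [moll_fderiv hρs, fderiv_rho_eq_zero hρs hρ01 hρ0 h1, smul_zero]

lemma integral_scale (g : En n → ℝ) {m : ℕ} (hm : m ≠ 0) :
    ∫ z : En n, (m:ℝ)^n * g ((m:ℝ) • z) = ∫ z, g z := by
  have hm' : (0:ℝ) < m := by exact_mod_cast Nat.pos_of_ne_zero hm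
  rw [MeasureTheory.integral_const_mul,
    MeasureTheory.Measure.integral_comp_smul_of_nonneg volume g ((m:ℝ)) (hR := le_of_lt hm'),
    finrank_euclideanSpace_fin, smul_eq_mul]
  have : ((m:ℝ)^n) ≠ 0 := by positivity
  field_simp

lemma moll_integral (hρint : (∫ x, ρ x) = 1) {m : ℕ} (hm : m ≠ 0) :
    ∫ z, mollifier n ρ m z = 1 := by
  have h := integral_scale (n := n) ρ hm
  rw [hρint] at h
  simpa [mollifier] using h


lemma divg_sub_bound (L L' : En n →L[ℝ] En n) :
    |(∑ i, (L (evec n i)) i) - ∑ i, (L' (evec n i)) i| ≤ n * ‖L - L'‖ := by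
  rw [← Finset.sum_sub_distrib]
  refine (Finset.abs_sum_le_sum_abs _ _).trans ?_
  have h : ∀ i ∈ Finset.univ, |(L (evec n i)) i - (L' (evec n i)) i| ≤ ‖L - L'‖ := by
    intro i _
    have h1 : |((L - L') (evec n i)) i| ≤ ‖(L - L') (evec n i)‖ := coord_abs_le _ _
    have h2 : ‖(L - L') (evec n i)‖ ≤ ‖L - L'‖ * ‖evec n i‖ := (L - L').le_opNorm _
    have h3 : ‖evec n i‖ = 1 := by
      simp [evec, EuclideanSpace.norm_single]
    rw [h3, mul_one] at h2
    have h4 : (L (evec n i)) i - (L' (evec n i)) i = ((L - L') (evec n i)) i := rfl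
    rw [h4]
    exact h1.trans h2
  calc ∑ i, |(L (evec n i)) i - (L' (evec n i)) i| ≤ ∑ _i : Fin n, ‖L - L'‖ :=
        Finset.sum_le_sum h
  _ = n * ‖L - L'‖ := by
        rw [Finset.sum_const, Finset.card_univ, Fintype.card_fin, nsmul_eq_mul]

lemma divg_bound {C : En n → En n} {M : ℝ} (hM : ∀ x, ‖fderiv ℝ C x‖ ≤ M) (x : En n) :
    |divg n C x| ≤ n * M := by
  rw [divg]
  refine (Finset.abs_sum_le_sum_abs _ _).trans ?_
  have h : ∀ i ∈ Finset.univ, |(fderiv ℝ C x (evec n i)) i| ≤ M := by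
    intro i _
    have h1 : |(fderiv ℝ C x (evec n i)) i| ≤ ‖fderiv ℝ C x (evec n i)‖ := coord_abs_le _ _
    have h2 : ‖fderiv ℝ C x (evec n i)‖ ≤ ‖fderiv ℝ C x‖ * ‖evec n i‖ :=
      (fderiv ℝ C x).le_opNorm _
    have h3 : ‖evec n i‖ = 1 := by simp [evec, EuclideanSpace.norm_single]
    rw [h3, mul_one] at h2
    exact h1.trans (h2.trans (hM x))
  calc ∑ i, |(fderiv ℝ C x (evec n i)) i| ≤ ∑ _i : Fin n, M := Finset.sum_le_sum h
  _ = n * M := by simp [mul_comm]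

lemma divg_uc {C : En n → En n} (hCu : UniformContinuous (fderiv ℝ C)) :
    UniformContinuous (divg n C) := by
  rw [Metric.uniformContinuous_iff]
  intro ε hε
  obtain ⟨δ, hδ0, hδ⟩ := Metric.uniformContinuous_iff.1 hCu (ε / (n + 1)) (by positivity)
  refine ⟨δ, hδ0, fun {a b} hab => ?_⟩
  have h1 := hδ hab
  rw [dist_eq_norm] at h1
  have h2 : dist (divg n C a) (divg n C b) ≤ n * ‖fderiv ℝ C a - fderiv ℝ C b‖ := by
    rw [Real.dist_eq]
    exact divg_sub_bound _ _
  calc dist (divg n C a) (divg n C b) ≤ n * ‖fderiv ℝ C a - fderiv ℝ C b‖ := h2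
  _ ≤ n * (ε / (n + 1)) := by gcongr
  _ < ε := by
      rw [mul_div_assoc']
      rw [div_lt_iff₀ (by positivity)]
      nlinarith

lemma uc_mul_bounded {f g : En n → ℝ} (hf : UniformContinuous f) (hg : UniformContinuous g)
    {Mf Mg : ℝ} (hMf : ∀ x, |f x| ≤ Mf) (hMg : ∀ x, |g x| ≤ Mg) :
    UniformContinuous fun x => f x * g x := by
  have hMf0 : 0 ≤ Mf := le_trans (abs_nonneg _) (hMf 0)
  have hMg0 : 0 ≤ Mg := le_trans (abs_nonneg _) (hMg 0)
  rw [Metric.uniformContinuous_iff]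
  intro ε hε
  set K : ℝ := Mf + Mg + 1 with hK
  have hK0 : 0 < K := by positivity
  obtain ⟨δ1, hδ10, hδ1⟩ := Metric.uniformContinuous_iff.1 hf (ε / (2 * K)) (by positivity)
  obtain ⟨δ2, hδ20, hδ2⟩ := Metric.uniformContinuous_iff.1 hg (ε / (2 * K)) (by positivity)
  refine ⟨min δ1 δ2, lt_min hδ10 hδ20, fun {a b} hab => ?_⟩
  have h1 := hδ1 (lt_of_lt_of_le hab (min_le_left _ _))
  have h2 := hδ2 (lt_of_lt_of_le hab (min_le_right _ _))
  rw [Real.dist_eq] at h1 h2 ⊢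
  have key : |f a * g a - f b * g b| ≤ |f a| * |g a - g b| + |g b| * |f a - f b| := by
    calc |f a * g a - f b * g b| = |f a * (g a - g b) + g b * (f a - f b)| := by ring_nf
    _ ≤ |f a * (g a - g b)| + |g b * (f a - f b)| := abs_add_le _ _
    _ = |f a| * |g a - g b| + |g b| * |f a - f b| := by rw [abs_mul, abs_mul]
  have hb1 : |f a| * |g a - g b| ≤ Mf * (ε / (2 * K)) :=
    mul_le_mul (hMf a) (le_of_lt h2) (abs_nonneg _) hMf0
  have hb2 : |g b| * |f a - f b| ≤ Mg * (ε / (2 * K)) :=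
    mul_le_mul (hMg b) (le_of_lt h1) (abs_nonneg _) hMg0
  have hs : Mf * (ε / (2 * K)) + Mg * (ε / (2 * K)) ≤ ε / 2 := by
    calc Mf * (ε / (2 * K)) + Mg * (ε / (2 * K)) = (Mf + Mg) * (ε / (2 * K)) := by ring
    _ ≤ K * (ε / (2 * K)) := mul_le_mul_of_nonneg_right (by simp [hK]) (by positivity)
    _ = ε / 2 := by field_simp
  linarith [key.trans (add_le_add hb1 hb2), half_lt_self hε]


lemma support_mono_zero {β γ : Type*} [Zero β] [Zero γ] {F : En n → β} {f : En n → γ}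
    (h : ∀ z, F z = 0 → f z = 0) : Function.support f ⊆ Function.support F := by
  intro z hz
  simp only [Function.mem_support, ne_eq] at hz ⊢
  exact fun h0 => hz (h z h0)

lemma hcs_comp_sub {β : Type*} [TopologicalSpace β] [Zero β] {φ : En n → β}
    (hφ : HasCompactSupport φ) (x : En n) : HasCompactSupport fun y => φ (x - y) :=
  hφ.comp_homeomorph (Homeomorph.subLeft x)

lemma parts (hρs : ContDiff ℝ (⊤ : ℕ∞) ρ) (hρc : HasCompactSupport ρ)
    (hρint : (∫ x, ρ x) = 1) {m : ℕ} (hm : m ≠ 0) (A : En n →L[ℝ] En n) :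
    ∫ z, fderiv ℝ (mollifier n ρ m) z (A z) = -∑ i, (A (evec n i)) i := by
  have hdiff := moll_differentiable hρs m
  have hcont := moll_continuous hρs m
  have hcs := moll_hcs hρc hm
  have hcsD : HasCompactSupport fun z => fderiv ℝ (mollifier n ρ m) z := hcs.fderiv (𝕜 := ℝ)
  have hcontD := cont_fderiv_moll hρs m
  have hint_moll : Integrable (mollifier n ρ m) := hcont.integrable_of_hasCompactSupport hcs
  have key : ∀ i : Fin n, ∫ z, fderiv ℝ (mollifier n ρ m) z (evec n i) * (A z) i
      = -((A (evec n i)) i) := by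
    intro i
    have hPc : Continuous fun z : En n => (A z) i :=
      (EuclideanSpace.proj i : En n →L[ℝ] ℝ).continuous.comp A.continuous
    have hgdiff : Differentiable ℝ fun z : En n => (A z) i :=
      ((EuclideanSpace.proj i : En n →L[ℝ] ℝ).comp A).differentiable
    have hgfd : ∀ z₀ : En n, fderiv ℝ (fun z : En n => (A z) i) z₀
        = (EuclideanSpace.proj i : En n →L[ℝ] ℝ).comp A := by
      intro z₀
      have he : (fun z : En n => (A z) i)
          = ⇑((EuclideanSpace.proj i : En n →L[ℝ] ℝ).comp A) := rfl
      rw [he]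
      exact ContinuousLinearMap.fderiv _
    have hint1 : Integrable fun z => fderiv ℝ (mollifier n ρ m) z (evec n i) * (A z) i := by
      refine Continuous.integrable_of_hasCompactSupport
        ((hcontD.clm_apply continuous_const).mul hPc) ?_
      exact hcsD.mono (support_mono_zero fun z h0 => by rw [h0]; simp)
    have hint2 : Integrable fun z =>
        mollifier n ρ m z * fderiv ℝ (fun z : En n => (A z) i) z (evec n i) := by
      have he : (fun z => mollifier n ρ m z * fderiv ℝ (fun z : En n => (A z) i) z (evec n i))
          = fun z => mollifier n ρ m z * ((EuclideanSpace.proj i : En n →L[ℝ] ℝ).comp A) (evec n i) := by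
        funext z
        rw [hgfd z]
      rw [he]
      exact hint_moll.mul_const _
    have hint3 : Integrable fun z => mollifier n ρ m z * (A z) i := by
      refine Continuous.integrable_of_hasCompactSupport (hcont.mul hPc) ?_
      exact hcs.mono (support_mono_zero fun z h0 => by rw [h0]; ring)
    have h := integral_mul_fderiv_eq_neg_fderiv_mul_of_integrable (μ := volume)
      (f := mollifier n ρ m) (g := fun z : En n => (A z) i) (v := evec n i)
      hint1 hint2 hint3 (fun x _ => hdiff x) (fun x _ => hgdiff x)
    have hL : ∫ z, mollifier n ρ m z * fderiv ℝ (fun z : En n => (A z) i) z (evec n i)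
        = (A (evec n i)) i := by
      have he : (fun z => mollifier n ρ m z * fderiv ℝ (fun z : En n => (A z) i) z (evec n i))
          = fun z => mollifier n ρ m z * (A (evec n i)) i := by
        funext z
        rw [hgfd z]
        rfl
      rw [he, MeasureTheory.integral_mul_const, moll_integral hρint hm, one_mul]
    rw [hL] at h
    linarith [h]
  have hAz : (fun z => fderiv ℝ (mollifier n ρ m) z (A z))
      = fun z => ∑ i, (A z) i * fderiv ℝ (mollifier n ρ m) z (evec n i) := by
    funext z
    conv_lhs => rw [← euclid_decomp (A z)]
    rw [map_sum]
    refine Finset.sum_congr rfl fun i _ => ?_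
    rw [ContinuousLinearMap.map_smul, smul_eq_mul]
  rw [hAz, MeasureTheory.integral_finset_sum]
  · have hterm : ∀ i : Fin n, ∫ z, (A z) i * fderiv ℝ (mollifier n ρ m) z (evec n i)
        = -((A (evec n i)) i) := by
      intro i
      rw [← key i]
      congr 1
      funext z
      ring
    calc ∑ i, ∫ z, (A z) i * fderiv ℝ (mollifier n ρ m) z (evec n i)
        = ∑ i, -((A (evec n i)) i) := Finset.sum_congr rfl fun i _ => hterm i
    _ = -∑ i, (A (evec n i)) i := by rw [Finset.sum_neg_distrib]
  · intro i _
    have hPc : Continuous fun z : En n => (A z) i :=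
      (EuclideanSpace.proj i : En n →L[ℝ] ℝ).continuous.comp A.continuous
    refine Continuous.integrable_of_hasCompactSupport
      (hPc.mul (hcontD.clm_apply continuous_const)) ?_
    exact hcsD.mono (support_mono_zero fun z h0 => by rw [h0]; simp)

end Stmt12

set_option maxHeartbeats 2000000 in
/-- For `u ∈ C_b(ℝⁿ)` and a `C¹` vector field `C` with bounded and
uniformly continuous derivative, the mollified quantities `R_{m,1}` converge uniformly on
`ℝⁿ` to `u · div C`, `R_{m,2}` converge uniformly to `−u · div C`, and in particular
`R_{m,1} + R_{m,2} → 0` uniformly on `ℝⁿ`. -/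
theorem stmt12 (n : ℕ) (hn : 1 ≤ n) (u : En n → ℝ) (hu : IsCb n u)
    (C : En n → En n) (hC : ContDiff ℝ 1 C)
    (hCb : ∃ M, ∀ x, ‖fderiv ℝ C x‖ ≤ M) (hCu : UniformContinuous (fderiv ℝ C))
    (ρ : En n → ℝ) (hρs : ContDiff ℝ (⊤ : ℕ∞) ρ) (hρc : HasCompactSupport ρ)
    (hρ01 : ∀ x, 0 ≤ ρ x ∧ ρ x ≤ 1) (hρint : (∫ x, ρ x) = 1)
    (hρ0 : ∀ x : En n, 1 ≤ ‖x‖ → ρ x = 0) :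
    TendstoUniformly (fun m => Rm1 n u C ρ m) (fun x => u x * divg n C x) Filter.atTop ∧
    TendstoUniformly (fun m => Rm2 n u C ρ m) (fun x => -(u x * divg n C x)) Filter.atTop ∧
    TendstoUniformly (fun m x => Rm1 n u C ρ m x + Rm2 n u C ρ m x) (fun _ => 0)
      Filter.atTop := by
  classical
  obtain ⟨huc, Mu, hMu⟩ := hu
  obtain ⟨M, hM⟩ := hCb
  have hMu0 : 0 ≤ Mu := le_trans (abs_nonneg _) (hMu 0)
  have hM0 : 0 ≤ M := le_trans (norm_nonneg _) (hM 0)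
  have hf_uc : UniformContinuous fun x => u x * divg n C x :=
    Stmt12.uc_mul_bounded huc (Stmt12.divg_uc hCu) hMu (Stmt12.divg_bound hM)
  have hu_cont : Continuous u := huc.continuous
  have hdivg_cont : Continuous (divg n C) := (Stmt12.divg_uc hCu).continuous
  have h1 : TendstoUniformly (fun m => Rm1 n u C ρ m) (fun x => u x * divg n C x)
      Filter.atTop := by
    rw [Metric.tendstoUniformly_iff]
    intro ε hε
    obtain ⟨δ, hδ0, hδ⟩ := Metric.uniformContinuous_iff.1 hf_uc (ε/2) (by positivity)
    obtain ⟨N0, hN0⟩ := exists_nat_one_div_lt hδ0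
    rw [Filter.eventually_atTop]
    refine ⟨N0 + 1, fun m hm x => ?_⟩
    have hm0 : m ≠ 0 := by omega
    have hm0' : (0:ℝ) < m := by exact_mod_cast Nat.pos_of_ne_zero hm0
    have hmδ : 1/(m:ℝ) < δ := by
      have hi : 1/(m:ℝ) ≤ 1/((N0:ℝ)+1) := by
        apply one_div_le_one_div_of_le (by positivity)
        exact_mod_cast hm
      exact lt_of_le_of_lt hi hN0
    have hmollc := Stmt12.moll_continuous hρs m
    have hmollcs := Stmt12.moll_hcs hρc hm0
    have hcsR : HasCompactSupport fun y => mollifier n ρ m (x - y) :=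
      Stmt12.hcs_comp_sub hmollcs x
    have hcontR : Continuous fun y => mollifier n ρ m (x - y) :=
      hmollc.comp (continuous_const.sub continuous_id)
    have hintmoll : Integrable fun y => mollifier n ρ m (x - y) :=
      hcontR.integrable_of_hasCompactSupport hcsR
    have hint1 : Integrable fun y => (u y * divg n C y) * mollifier n ρ m (x - y) := by
      refine Continuous.integrable_of_hasCompactSupport
        ((hu_cont.mul hdivg_cont).mul hcontR) ?_
      exact hcsR.mono (Stmt12.support_mono_zero fun z h0 => by rw [h0]; ring)
    have hint2 : Integrable fun y => (u x * divg n C x) * mollifier n ρ m (x - y) :=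
      hintmoll.const_mul _
    have hmoll1 : ∫ y, mollifier n ρ m (x - y) = 1 := by
      rw [MeasureTheory.integral_sub_left_eq_self (mollifier n ρ m) volume x]
      exact Stmt12.moll_integral hρint hm0
    have key : Rm1 n u C ρ m x - u x * divg n C x
        = ∫ y, (u y * divg n C y - u x * divg n C x) * mollifier n ρ m (x - y) := by
      have e1 : (fun y => (u y * divg n C y - u x * divg n C x) * mollifier n ρ m (x - y))
          = fun y => (u y * divg n C y) * mollifier n ρ m (x - y)
            - (u x * divg n C x) * mollifier n ρ m (x - y) := by
        funext y; ring
      rw [e1, MeasureTheory.integral_sub hint1 hint2, MeasureTheory.integral_const_mul,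
        hmoll1, mul_one]
      rfl
    rw [Real.dist_eq, abs_sub_comm, key]
    have hpt : ∀ y, ‖(u y * divg n C y - u x * divg n C x) * mollifier n ρ m (x - y)‖
        ≤ (ε/2) * mollifier n ρ m (x - y) := by
      intro y
      by_cases h0 : mollifier n ρ m (x - y) = 0
      · rw [h0]; simp
      · have hxy : ‖x - y‖ < 1/(m:ℝ) := by
          by_contra hcon
          exact h0 (Stmt12.moll_eq_zero hρ0 hm0 (le_of_not_gt hcon))
        have hdist : dist y x < δ := by
          rw [dist_eq_norm, ← norm_neg, neg_sub]
          exact hxy.trans hmδ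
        have hfy : |u y * divg n C y - u x * divg n C x| ≤ ε/2 := by
          have hc := hδ hdist
          rw [Real.dist_eq] at hc
          exact le_of_lt hc
        rw [Real.norm_eq_abs, abs_mul, abs_of_nonneg (Stmt12.moll_nonneg hρ01 m _)]
        exact mul_le_mul_of_nonneg_right hfy (Stmt12.moll_nonneg hρ01 m _)
    have hb := MeasureTheory.norm_integral_le_of_norm_le (hintmoll.const_mul (ε/2))
      (Filter.Eventually.of_forall hpt)
    rw [MeasureTheory.integral_const_mul, hmoll1, mul_one] at hb
    rw [Real.norm_eq_abs] at hb
    linarith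
  have h2 : TendstoUniformly (fun m => Rm2 n u C ρ m) (fun x => -(u x * divg n C x))
      Filter.atTop := by
    rw [Metric.tendstoUniformly_iff]
    intro ε hε
    set Kρ : ℝ := ∫ z : En n, ‖z‖ * ‖fderiv ℝ ρ z‖ with hKρ
    have hKρ0 : 0 ≤ Kρ :=
      MeasureTheory.integral_nonneg fun z => mul_nonneg (norm_nonneg _) (norm_nonneg _)
    set s : ℝ := ε / (2 * (M + Mu + 1) * (Kρ + 1)) with hs
    have hs0 : 0 < s := by
      rw [hs]
      have : 0 < 2 * (M + Mu + 1) * (Kρ + 1) := by positivity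
      positivity
    obtain ⟨δ1, hδ10, hδ1⟩ := Metric.uniformContinuous_iff.1 huc s hs0
    obtain ⟨δ2, hδ20, hδ2⟩ := Metric.uniformContinuous_iff.1 hCu s hs0
    have hδ0 : 0 < min δ1 δ2 := lt_min hδ10 hδ20
    obtain ⟨N0, hN0⟩ := exists_nat_one_div_lt hδ0
    rw [Filter.eventually_atTop]
    refine ⟨N0 + 1, fun m hm x => ?_⟩
    have hm0 : m ≠ 0 := by omega
    have hm0' : (0:ℝ) < m := by exact_mod_cast Nat.pos_of_ne_zero hm0
    have hmδ : 1/(m:ℝ) < min δ1 δ2 := by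
      have hi : 1/(m:ℝ) ≤ 1/((N0:ℝ)+1) := by
        apply one_div_le_one_div_of_le (by positivity)
        exact_mod_cast hm
      exact lt_of_le_of_lt hi hN0
    set A := fderiv ℝ C x with hA
    have hCcont : Continuous C := hC.continuous
    have hCdiff : Differentiable ℝ C := hC.differentiable (by norm_num)
    have hcontD := Stmt12.cont_fderiv_moll hρs m
    have hcsD : HasCompactSupport fun z => fderiv ℝ (mollifier n ρ m) z :=
      (Stmt12.moll_hcs hρc hm0).fderiv (𝕜 := ℝ)
    have hcsDx : HasCompactSupport fun y => fderiv ℝ (mollifier n ρ m) (x - y) :=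
      Stmt12.hcs_comp_sub hcsD x
    have hcontDx : Continuous fun y => fderiv ℝ (mollifier n ρ m) (x - y) :=
      hcontD.comp (continuous_const.sub continuous_id)
    have hint1 : Integrable fun y => u y * fderiv ℝ (mollifier n ρ m) (x - y) (C x - C y) := by
      refine Continuous.integrable_of_hasCompactSupport
        (hu_cont.mul (hcontDx.clm_apply (continuous_const.sub hCcont))) ?_
      exact hcsDx.mono (Stmt12.support_mono_zero fun z h0 => by rw [h0]; simp)
    have hint2 : Integrable fun y => u x * fderiv ℝ (mollifier n ρ m) (x - y) (A (x - y)) := by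
      refine Continuous.integrable_of_hasCompactSupport
        (continuous_const.mul (hcontDx.clm_apply
          (A.continuous.comp (continuous_const.sub continuous_id)))) ?_
      exact hcsDx.mono (Stmt12.support_mono_zero fun z h0 => by rw [h0]; simp)
    have hI2 : ∫ y, u x * fderiv ℝ (mollifier n ρ m) (x - y) (A (x - y))
        = -(u x * divg n C x) := by
      have hsub : (∫ y, fderiv ℝ (mollifier n ρ m) (x - y) (A (x - y)))
          = ∫ z, fderiv ℝ (mollifier n ρ m) z (A z) :=
        MeasureTheory.integral_sub_left_eq_self
          (fun z => fderiv ℝ (mollifier n ρ m) z (A z)) volume x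
      have hparts := Stmt12.parts hρs hρc hρint hm0 A
      rw [MeasureTheory.integral_const_mul, hsub, hparts]
      have hdg : (∑ i, (A (evec n i)) i) = divg n C x := by rw [hA]; rfl
      rw [hdg]
      ring
    have key : Rm2 n u C ρ m x - (-(u x * divg n C x))
        = ∫ y, (u y * fderiv ℝ (mollifier n ρ m) (x - y) (C x - C y)
            - u x * fderiv ℝ (mollifier n ρ m) (x - y) (A (x - y))) := by
      rw [MeasureTheory.integral_sub hint1 hint2, hI2]
      rfl
    rw [Real.dist_eq, abs_sub_comm, key]
    have hψc : Continuous fun w : En n => ‖w‖ * ‖fderiv ℝ ρ w‖ :=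
      continuous_norm.mul
        ((hρs.continuous_fderiv (by simp)).norm)
    have hcsρD : HasCompactSupport fun y => fderiv ℝ ρ ((m:ℝ) • (x - y)) := by
      have hfd : HasCompactSupport (fderiv ℝ ρ) := hρc.fderiv (𝕜 := ℝ)
      have h2' : HasCompactSupport fun z : En n => fderiv ℝ ρ ((m:ℝ) • z) :=
        hfd.comp_homeomorph (Homeomorph.smulOfNeZero (m:ℝ) (Nat.cast_ne_zero.2 hm0))
      exact Stmt12.hcs_comp_sub h2' x
    have hBc : Continuous fun y : En n => (s * M + Mu * s)
        * ((m:ℝ)^n * (‖(m:ℝ) • (x - y)‖ * ‖fderiv ℝ ρ ((m:ℝ) • (x - y))‖)) := by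
      have : Continuous fun y : En n => (m:ℝ) • (x - y) :=
        Continuous.const_smul (g := fun y : En n => x - y) (continuous_const.sub continuous_id) (m:ℝ)
      exact continuous_const.mul (continuous_const.mul (hψc.comp this))
    have hBint : Integrable fun y : En n => (s * M + Mu * s)
        * ((m:ℝ)^n * (‖(m:ℝ) • (x - y)‖ * ‖fderiv ℝ ρ ((m:ℝ) • (x - y))‖)) := by
      refine Continuous.integrable_of_hasCompactSupport hBc ?_
      exact hcsρD.mono (Stmt12.support_mono_zero fun z h0 => by rw [h0]; simp)
    have hBval : ∫ y, (s * M + Mu * s)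
        * ((m:ℝ)^n * (‖(m:ℝ) • (x - y)‖ * ‖fderiv ℝ ρ ((m:ℝ) • (x - y))‖))
        = (s * M + Mu * s) * Kρ := by
      rw [MeasureTheory.integral_const_mul]
      congr 1
      have hsub : (∫ y, (m:ℝ)^n * (‖(m:ℝ) • (x - y)‖ * ‖fderiv ℝ ρ ((m:ℝ) • (x - y))‖))
          = ∫ z, (m:ℝ)^n * (‖(m:ℝ) • z‖ * ‖fderiv ℝ ρ ((m:ℝ) • z)‖) :=
        MeasureTheory.integral_sub_left_eq_self
          (fun z => (m:ℝ)^n * (‖(m:ℝ) • z‖ * ‖fderiv ℝ ρ ((m:ℝ) • z)‖)) volume x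
      rw [hsub, hKρ]
      exact Stmt12.integral_scale (fun w => ‖w‖ * ‖fderiv ℝ ρ w‖) hm0
    have hpt : ∀ y, ‖u y * fderiv ℝ (mollifier n ρ m) (x - y) (C x - C y)
        - u x * fderiv ℝ (mollifier n ρ m) (x - y) (A (x - y))‖
        ≤ (s * M + Mu * s)
          * ((m:ℝ)^n * (‖(m:ℝ) • (x - y)‖ * ‖fderiv ℝ ρ ((m:ℝ) • (x - y))‖)) := by
      intro y
      by_cases hy : ‖x - y‖ ≤ 1/(m:ℝ)
      · have hD : fderiv ℝ (mollifier n ρ m) (x - y)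
            = ((m:ℝ)^(n+1)) • fderiv ℝ ρ ((m:ℝ) • (x - y)) := Stmt12.moll_fderiv hρs m _
        set D := fderiv ℝ (mollifier n ρ m) (x - y) with hDdef
        have hDn : ‖D‖ = (m:ℝ)^(n+1) * ‖fderiv ℝ ρ ((m:ℝ) • (x - y))‖ := by
          rw [hD, norm_smul, Real.norm_eq_abs, abs_of_pos (by positivity)]
        have hdisty : dist y x < min δ1 δ2 := by
          rw [dist_eq_norm, ← norm_neg, neg_sub]
          exact lt_of_le_of_lt hy hmδ
        have huy : |u y - u x| ≤ s := by
          have hc := hδ1 (hdisty.trans_le (min_le_left _ _))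
          rw [Real.dist_eq] at hc
          exact le_of_lt hc
        have hmean : ‖C x - C y - A (x - y)‖ ≤ s * ‖x - y‖ := by
          have hball : Convex ℝ (Metric.closedBall x (1/(m:ℝ))) := convex_closedBall _ _
          have hdiffB : ∀ w ∈ Metric.closedBall x (1/(m:ℝ)),
              DifferentiableAt ℝ (fun w => C w - A w) w :=
            fun w _ => (hCdiff w).sub A.differentiableAt
          have hbound : ∀ w ∈ Metric.closedBall x (1/(m:ℝ)),
              ‖fderiv ℝ (fun w => C w - A w) w‖ ≤ s := by
            intro w hw
            have hfd : fderiv ℝ (fun w => C w - A w) w = fderiv ℝ C w - A := by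
              rw [fderiv_fun_sub (hCdiff w) A.differentiableAt, ContinuousLinearMap.fderiv]
            rw [hfd, hA]
            have hdw : dist w x < δ2 :=
              lt_of_le_of_lt (Metric.mem_closedBall.1 hw) (hmδ.trans_le (min_le_right _ _))
            have hc := hδ2 hdw
            rw [dist_eq_norm] at hc
            exact le_of_lt hc
          have hxmem : x ∈ Metric.closedBall x (1/(m:ℝ)) :=
            Metric.mem_closedBall_self (by positivity)
          have hymem : y ∈ Metric.closedBall x (1/(m:ℝ)) := by
            rw [Metric.mem_closedBall, dist_eq_norm, norm_sub_rev]
            exact hy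
          have hMV := Convex.norm_image_sub_le_of_norm_fderiv_le hdiffB hbound hball hymem hxmem
          have he : C x - C y - A (x - y) = (C x - A x) - (C y - A y) := by
            rw [map_sub]
            abel
          rw [he]
          exact hMV
        have hAb : ‖A (x - y)‖ ≤ M * ‖x - y‖ := by
          refine le_trans (A.le_opNorm _) ?_
          have : ‖A‖ ≤ M := by rw [hA]; exact hM x
          exact mul_le_mul_of_nonneg_right this (norm_nonneg _)
        have split : u y * D (C x - C y) - u x * D (A (x - y))
            = (u y - u x) * D (A (x - y)) + u y * D (C x - C y - A (x - y)) := by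
          simp only [map_sub]
          ring
        rw [split]
        have t1 : ‖(u y - u x) * D (A (x - y))‖ ≤ s * (‖D‖ * (M * ‖x - y‖)) := by
          rw [norm_mul]
          have b1 : ‖u y - u x‖ ≤ s := by rwa [Real.norm_eq_abs]
          have b2 : ‖D (A (x - y))‖ ≤ ‖D‖ * (M * ‖x - y‖) :=
            le_trans (D.le_opNorm _) (mul_le_mul_of_nonneg_left hAb (norm_nonneg _))
          exact mul_le_mul b1 b2 (norm_nonneg _) (le_of_lt hs0)
        have t2 : ‖u y * D (C x - C y - A (x - y))‖ ≤ Mu * (‖D‖ * (s * ‖x - y‖)) := by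
          rw [norm_mul]
          have b1 : ‖u y‖ ≤ Mu := by rw [Real.norm_eq_abs]; exact hMu y
          have b2 : ‖D (C x - C y - A (x - y))‖ ≤ ‖D‖ * (s * ‖x - y‖) :=
            le_trans (D.le_opNorm _) (mul_le_mul_of_nonneg_left hmean (norm_nonneg _))
          exact mul_le_mul b1 b2 (norm_nonneg _) hMu0
        calc ‖(u y - u x) * D (A (x - y)) + u y * D (C x - C y - A (x - y))‖
            ≤ ‖(u y - u x) * D (A (x - y))‖ + ‖u y * D (C x - C y - A (x - y))‖ :=
              norm_add_le _ _
        _ ≤ s * (‖D‖ * (M * ‖x - y‖)) + Mu * (‖D‖ * (s * ‖x - y‖)) := add_le_add t1 t2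
        _ = (s * M + Mu * s) * (‖D‖ * ‖x - y‖) := by ring
        _ = (s * M + Mu * s)
            * ((m:ℝ)^n * (‖(m:ℝ) • (x - y)‖ * ‖fderiv ℝ ρ ((m:ℝ) • (x - y))‖)) := by
            rw [hDn, norm_smul, Real.norm_eq_abs, abs_of_pos hm0']
            ring
      · have h0 : fderiv ℝ (mollifier n ρ m) (x - y) = 0 :=
          Stmt12.fderiv_moll_eq_zero hρs hρ01 hρ0 hm0 (le_of_lt (lt_of_not_ge hy))
        rw [h0]
        simp only [ContinuousLinearMap.zero_apply, mul_zero, sub_zero, norm_zero]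
        have hc0 : 0 ≤ s * M + Mu * s := by
          have := le_of_lt hs0
          nlinarith
        exact mul_nonneg hc0 (by positivity)
    have hb := MeasureTheory.norm_integral_le_of_norm_le hBint (Filter.Eventually.of_forall hpt)
    rw [hBval, Real.norm_eq_abs] at hb
    have hfinal : (s * M + Mu * s) * Kρ < ε := by
      have e1 : (s * M + Mu * s) * Kρ = s * ((M + Mu) * Kρ) := by ring
      have e2 : (M + Mu) * Kρ < (M + Mu + 1) * (Kρ + 1) := by nlinarith
      have e3 : s * ((M + Mu) * Kρ) < s * ((M + Mu + 1) * (Kρ + 1)) :=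
        mul_lt_mul_of_pos_left e2 hs0
      have e4 : s * ((M + Mu + 1) * (Kρ + 1)) = ε / 2 := by
        rw [hs]
        field_simp
      linarith
    linarith
  refine ⟨h1, h2, ?_⟩
  have h3 := h1.add h2
  have e1 : (fun m x => Rm1 n u C ρ m x + Rm2 n u C ρ m x)
      = ((fun m => Rm1 n u C ρ m) + fun m => Rm2 n u C ρ m) := rfl
  have e2 : (fun _ : En n => (0:ℝ))
      = ((fun x => u x * divg n C x) + fun x => -(u x * divg n C x)) := by
    funext x; simp
  rw [e1, e2]
  exact h3

end
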